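/- Let $r$ be an odd prime, $x$ an integer coprime to $r$, and $t > h \ge 0$ integers such that the multiplicative order of $x$ modulo $r^t$ equals $r^h$. Then $r^{h+1}$ does not divide $\Psi_{r^h}(x) = 1 + x + \cdots + x^{r^h - 1}$. -/

import Mathlib

theorem stmt_11 (r : ℕ) (hr : r.Prime) (hrodd : Odd r) (x : ℤ) (hcop : Int.gcd x r = 1)
    (t h : ℕ) (hth : h < t)
    (hord : orderOf (x : ZMod (r ^ t)) = r ^ h) :
    ¬ ((r : ℤ) ^ (h + 1) ∣ ∑ i ∈ Finset.range (r ^ h), x ^ i) := by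
  intro hdvd
  haveI : Fact r.Prime := ⟨hr⟩
  have hcop' : IsCoprime x (r : ℤ) := Int.isCoprime_iff_gcd_eq_one.mpr hcop
  have hndx : ¬ (r : ℤ) ∣ x := by
    intro hd
    have : IsUnit (r : ℤ) := hcop'.isUnit_of_dvd' hd dvd_rfl
    rw [Int.isUnit_iff] at this
    have := hr.two_le
    omega
  rcases Nat.eq_zero_or_pos h with rfl | hpos
  · simp only [pow_zero, Finset.range_one, Finset.sum_singleton, pow_zero, zero_add,
      pow_one] at hdvd
    have := Int.le_of_dvd one_pos hdvd
    have := hr.two_le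
    omega
  -- h ≥ 1
  have hx1 : x ≠ 1 := by
    rintro rfl
    simp only [Int.cast_one, orderOf_one] at hord
    have := hr.one_lt
    have : r ^ h = 1 := hord.symm
    rw [pow_eq_one_iff] at this
    omega
  -- x ≡ 1 mod r
  have hdvd_sub : (r : ℤ) ∣ x - 1 := by
    have hdvdpow : r ∣ r ^ t := dvd_pow_self r (by omega : t ≠ 0)
    let f : ZMod (r ^ t) →+* ZMod r := ZMod.castHom hdvdpow (ZMod r)
    have hmap : f ((x : ℤ) : ZMod (r ^ t)) = ((x : ℤ) : ZMod r) := map_intCast f x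
    have hd1 : orderOf ((x : ℤ) : ZMod r) ∣ r ^ h := by
      rw [← hmap, ← hord]; exact orderOf_map_dvd f.toMonoidHom _
    have hx0 : ((x : ℤ) : ZMod r) ≠ 0 := by
      intro h0
      exact hndx ((ZMod.intCast_zmod_eq_zero_iff_dvd x r).mp h0)
    have hd2 : orderOf ((x : ℤ) : ZMod r) ∣ r - 1 := by
      apply orderOf_dvd_of_pow_eq_one
      exact ZMod.pow_card_sub_one_eq_one hx0
    have hcopr : Nat.Coprime (r ^ h) (r - 1) := by
      apply Nat.Coprime.pow_left
      have : Nat.Coprime (1 + (r - 1)) (r - 1) := Nat.coprime_add_self_left.mpr (by simp)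
      rwa [Nat.add_sub_cancel' hr.one_le] at this
    have : orderOf ((x : ℤ) : ZMod r) ∣ Nat.gcd (r ^ h) (r - 1) := Nat.dvd_gcd hd1 hd2
    rw [Nat.Coprime] at hcopr
    rw [hcopr, Nat.dvd_one] at this
    have hx1' : ((x : ℤ) : ZMod r) = 1 := orderOf_eq_one_iff.mp this
    have : (((x - 1 : ℤ)) : ZMod r) = 0 := by push_cast [hx1']; ring
    exact (ZMod.intCast_zmod_eq_zero_iff_dvd _ r).mp this
  -- LTE
  have hprime : Prime (r : ℤ) := Nat.prime_iff_prime_int.mp hr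
  have hfin : FiniteMultiplicity (r : ℤ) (x - 1) :=
    Int.finiteMultiplicity_iff.mpr ⟨by simpa using hr.ne_one, sub_ne_zero.mpr hx1⟩
  have key : emultiplicity (r : ℤ) (x ^ (r ^ h) - 1 ^ (r ^ h)) =
      emultiplicity (r : ℤ) (x - 1) + emultiplicity r (r ^ h) :=
    Int.emultiplicity_pow_sub_pow hr hrodd (by simpa using hdvd_sub) hndx (r ^ h)
  rw [one_pow, emultiplicity_pow_self_of_prime hr.prime] at key
  have hgeom : (∑ i ∈ Finset.range (r ^ h), x ^ i) * (x - 1) = x ^ (r ^ h) - 1 :=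
    geom_sum_mul x (r ^ h)
  rw [← hgeom, emultiplicity_mul hprime] at key
  have hle : ((h + 1 : ℕ) : ℕ∞) ≤ emultiplicity (r : ℤ) (∑ i ∈ Finset.range (r ^ h), x ^ i) :=
    le_emultiplicity_of_pow_dvd hdvd
  have hne : emultiplicity (r : ℤ) (x - 1) ≠ ⊤ := finiteMultiplicity_iff_emultiplicity_ne_top.mp hfin
  have hS : emultiplicity (r : ℤ) (∑ i ∈ Finset.range (r ^ h), x ^ i) = (h : ℕ∞) := by
    have := key
    rw [add_comm (emultiplicity (r : ℤ) (x - 1)) ((h : ℕ∞))] at this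
    exact WithTop.add_right_cancel hne this
  rw [hS] at hle
  exact absurd (by exact_mod_cast hle) (by omega)
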